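/- arXiv:1907.07795 — 3 statements merged into one kernel-verified Lean document; each statement's English description precedes it below -/
import Mathlib

section
/- Let a be even with 0 < a < b and b odd. Then (a | b) = (-1)^(a(b-1)/4) · (a | b - a). -/
theorem jacobi_single_even_reduction (a b : ℕ) (ha : Even a) (hapos : 0 < a)
    (hab : a < b) (hb : Odd b) :
    jacobiSym (a : ℤ) b = (-1) ^ (a * (b - 1) / 4) * jacobiSym (a : ℤ) (b - a) := by
  set c := b - a with hc
  have hcodd : Odd c := Nat.Odd.sub_even hab.le hb ha
  have hbc : (b : ℤ) = (a : ℤ) + c := by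
    have : a + c = b := by omega
    exact_mod_cast this.symm
  -- Step 1: J(a|b) = J(-(c)|b)
  have h1 : jacobiSym (a : ℤ) b = jacobiSym (-(c : ℤ)) b := by
    apply jacobiSym.mod_left'
    have : -(c : ℤ) = (a : ℤ) - b := by rw [hbc]; ring
    rw [this]; simp [Int.sub_emod]
  -- Step 2: J(-(c)|b) = χ₄ b * J(c|b)
  have h2 : jacobiSym (-(c : ℤ)) b = ZMod.χ₄ b * jacobiSym (c : ℤ) b := jacobiSym.neg _ hb
  -- Step 3: reciprocity
  have h3 : jacobiSym (c : ℤ) b = (-1) ^ (c / 2 * (b / 2)) * jacobiSym (b : ℤ) c :=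
    jacobiSym.quadratic_reciprocity hcodd hb
  -- Step 4: J(b|c) = J(a|c)
  have h4 : jacobiSym (b : ℤ) c = jacobiSym (a : ℤ) c := by
    apply jacobiSym.mod_left'
    rw [hbc]; simp [Int.add_emod]
  have h5 : ZMod.χ₄ b = (-1 : ℤ) ^ (b / 2) := ZMod.χ₄_eq_neg_one_pow (Nat.odd_iff.mp hb)
  rw [h1, h2, h3, h4, h5, ← mul_assoc, ← pow_add]
  congr 1
  -- sign exponents have the same parity
  obtain ⟨x, hx⟩ : ∃ x, a = 2 * x := by
    obtain ⟨x, hx⟩ := ha; exact ⟨x, by omega⟩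
  obtain ⟨y, hy⟩ := hcodd
  have hxy : b / 2 = x + y := by omega
  have hc2 : c / 2 = y := by omega
  have he2 : a * (b - 1) / 4 = x * (x + y) := by
    have h41 : a * (b - 1) = 4 * (x * (x + y)) := by
      have hb1 : b - 1 = 2 * x + 2 * y := by omega
      rw [hx, hb1]; ring
    rw [h41, Nat.mul_div_cancel_left _ (by norm_num)]
  rw [hxy, hc2, he2]
  have heven : Even ((x + y + y * (x + y)) + x * (x + y)) := by
    have : (x + y + y * (x + y)) + x * (x + y) = (x + y) * (x + y + 1) := by ring
    rw [this]; exact Nat.even_mul_succ_self _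
  have hmod : ((x + y + y * (x + y)) + x * (x + y)) % 2 = 0 := Nat.even_iff.mp heven
  have : (x + y + y * (x + y)) % 2 = (x * (x + y)) % 2 := by omega
  calc (-1 : ℤ) ^ (x + y + y * (x + y)) = (-1) ^ ((x + y + y * (x + y)) % 2) :=
        neg_one_pow_eq_pow_mod_two _
    _ = (-1) ^ ((x * (x + y)) % 2) := by rw [this]
    _ = (-1) ^ (x * (x + y)) := (neg_one_pow_eq_pow_mod_two _).symm
end

section
/- Let a ≡ 2 (mod 4), a > 0, b odd positive, and 1 ≤ m ≤ ⌊b/a⌋. Then (a | b) = (-1)^(m(b-1)/2 + m(m-1)/2) · (a | b - m·a). -/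
open ZMod

private lemma jacobi_step (a b : ℕ) (ha : a % 4 = 2) (hb : Odd b) (hab : a ≤ b) :
    jacobiSym (a : ℤ) b = (-1) ^ ((b - 1) / 2) * jacobiSym (a : ℤ) (b - a) := by
  set c := a / 2 with hc
  have hac : a = 2 * c := by omega
  have hco : Odd c := by rw [Nat.odd_iff]; omega
  have hbo : b % 2 = 1 := Nat.odd_iff.mp hb
  have hb'o : Odd (b - a) := by rw [Nat.odd_iff]; omega
  have hcast : ((a : ℤ)) = (2 : ℤ) * (c : ℕ) := by rw [hac]; push_cast; ring
  have hsplit : ∀ n : ℕ, Odd n → jacobiSym (a : ℤ) n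
      = χ₈ n * ((-1) ^ (c / 2 * (n / 2)) * jacobiSym (n : ℤ) c) := by
    intro n hn
    rw [hcast, jacobiSym.mul_left, jacobiSym.at_two hn,
      jacobiSym.quadratic_reciprocity hco hn]
  rw [hsplit b hb, hsplit (b - a) hb'o]
  have hmod : jacobiSym ((b - a : ℕ) : ℤ) c = jacobiSym (b : ℤ) c := by
    apply jacobiSym.mod_left'
    have h1 : ((b - a : ℕ) : ℤ) = (b : ℤ) - 2 * c := by
      have : (c:ℤ) = (c:ℕ) := rfl
      push_cast [hac]
      omega
    rw [h1, Int.sub_emod]; simp [Int.mul_emod_left, Int.mul_emod_right, Int.emod_emod_of_dvd]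
  rw [hmod]
  suffices h : (χ₈ b : ℤ) * (-1) ^ (c / 2 * (b / 2)) =
      (-1) ^ ((b - 1) / 2) * ((χ₈ ((b - a : ℕ)) : ℤ) * (-1) ^ (c / 2 * ((b - a) / 2))) by
    rw [show (χ₈ b : ℤ) * ((-1) ^ (c / 2 * (b / 2)) * jacobiSym (b:ℤ) c)
        = ((χ₈ b : ℤ) * (-1) ^ (c / 2 * (b / 2))) * jacobiSym (b:ℤ) c by ring, h]
    ring
  have h8a : a % 8 = 2 ∨ a % 8 = 6 := by omega
  have h8b : b % 8 = 1 ∨ b % 8 = 3 ∨ b % 8 = 5 ∨ b % 8 = 7 := by omega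
  rw [χ₈_nat_eq_if_mod_eight, χ₈_nat_eq_if_mod_eight,
    neg_one_pow_eq_pow_mod_two (n := c / 2 * (b / 2)),
    neg_one_pow_eq_pow_mod_two (n := c / 2 * ((b - a) / 2)),
    neg_one_pow_eq_pow_mod_two (n := (b - 1) / 2),
    Nat.mul_mod (c / 2), Nat.mul_mod (c / 2)]
  have e1 : c / 2 % 2 = a % 8 / 4 := by omega
  have e3 : b / 2 % 2 = b % 8 / 2 % 2 := by omega
  have e4 : (b - a) / 2 % 2 = (b % 8 + 8 - a % 8) % 8 / 2 % 2 := by omega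
  have e5 : (b - a) % 2 = 1 := by omega
  have e6 : (b - a) % 8 = (b % 8 + 8 - a % 8) % 8 := by omega
  have e7 : (b - 1) / 2 % 2 = (b % 8 - 1) / 2 % 2 := by omega
  rw [e1, e3, e4, e5, e6, e7, hbo]
  rcases h8a with h1 | h1 <;> rcases h8b with h2 | h2 | h2 | h2 <;>
    simp only [h1, h2] <;> norm_num

theorem jacobi_reduction_two_mod_four (a b m : ℕ) (ha : a % 4 = 2) (hapos : 0 < a)
    (hb : Odd b) (hbpos : 0 < b) (hm : 1 ≤ m) (hm' : m ≤ b / a) :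
    jacobiSym (a : ℤ) b =
      (-1) ^ (m * (b - 1) / 2 + m * (m - 1) / 2) * jacobiSym (a : ℤ) (b - m * a) := by
  induction m, hm using Nat.le_induction with
  | base =>
    have hab : a ≤ b := by rwa [Nat.one_le_div_iff hapos] at hm'
    simpa using jacobi_step a b ha hb hab
  | succ n hn ih =>
    obtain ⟨e, rfl⟩ : ∃ e, a = 2 * (2 * e + 1) := ⟨a / 4, by omega⟩
    set d := 2 * e + 1 with hd
    have hbo : b % 2 = 1 := Nat.odd_iff.mp hb
    obtain ⟨k, rfl⟩ : ∃ k, b = 2 * k + 1 := ⟨b / 2, by omega⟩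
    have hdodd : d % 2 = 1 := by omega
    have hnab : (n + 1) * (2 * d) ≤ 2 * k + 1 := (Nat.le_div_iff_mul_le hapos).mp hm'
    have p1 : (n + 1) * (2 * d) = 2 * (n * d) + 2 * d := by ring
    have p2 : n * (2 * d) = 2 * (n * d) := by ring
    have hm'' : n ≤ (2 * k + 1) / (2 * d) := le_trans (Nat.le_succ n) hm'
    have ih' := ih hm''
    have hb' : Odd (2 * k + 1 - n * (2 * d)) := by rw [Nat.odd_iff]; omega
    have hab' : 2 * d ≤ 2 * k + 1 - n * (2 * d) := by omega
    have hstep := jacobi_step (2 * d) (2 * k + 1 - n * (2 * d)) ha hb' hab'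
    have harg : 2 * k + 1 - n * (2 * d) - 2 * d = 2 * k + 1 - (n + 1) * (2 * d) := by omega
    rw [harg] at hstep
    rw [ih', hstep]
    have f1 : n * (2 * k + 1 - 1) = 2 * (n * k) := by
      rw [show 2 * k + 1 - 1 = 2 * k from rfl]; ring
    have f2 : (n + 1) * (2 * k + 1 - 1) = 2 * (n * k) + 2 * k := by
      rw [show 2 * k + 1 - 1 = 2 * k from rfl]; ring
    have f3 : (n + 1) * (n + 1 - 1) = n * (n - 1) + 2 * n := by
      obtain ⟨p, rfl⟩ : ∃ p, n = p + 1 := ⟨n - 1, by omega⟩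
      simp only [Nat.add_sub_cancel]
      ring
    have f6 : n * d + n = 2 * (n * (e + 1)) := by rw [hd]; ring
    have key : (n * (2 * k + 1 - 1) / 2 + n * (n - 1) / 2
          + (2 * k + 1 - n * (2 * d) - 1) / 2) + 2 * (n * (e + 1))
        = (n + 1) * (2 * k + 1 - 1) / 2 + (n + 1) * (n + 1 - 1) / 2 := by
      omega
    have hpow : ((-1 : ℤ)) ^ ((n + 1) * (2 * k + 1 - 1) / 2 + (n + 1) * (n + 1 - 1) / 2)
        = (-1) ^ (n * (2 * k + 1 - 1) / 2 + n * (n - 1) / 2)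
          * (-1) ^ ((2 * k + 1 - n * (2 * d) - 1) / 2) := by
      rw [← key, pow_add, pow_mul, neg_one_sq, one_pow, mul_one, pow_add]
    rw [hpow]
    ring
end

section
/- For any positive integers a, b with b odd, there exists a finite sequence of reductions of the form (a, b) → (a - m·b, b) or (a, b) → (a, b - m·a) with 1 ≤ m ≤ the corresponding true quotient, after which one of the entries is 0, and the Jacobi symbol (a | b) equals [g = 1] times a product of signs each determined by the residues modulo 4 of the current pair and of m, where g is the remaining nonzero entry. -/
namespace LRJ

def ktab : ℕ → ℕ → ℕ → ℤ := fun x y m =>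
  if x = 0 then 1
  else if x = 1 then 1
  else if x = 3 then (if m = 2 then -1 else 1)
  else if m = 0 then 1
  else if m = 2 then -1
  else if y = m then 1 else -1
def etab : ℕ → ℕ → ℤ := fun x y => if x = 3 ∧ y = 3 then -1 else 1
lemma neg_one_pow_mul (a b : ℕ) :
    ((-1 : ℤ)) ^ (a * b) = if a % 2 = 1 ∧ b % 2 = 1 then -1 else 1 := by
  rcases Nat.even_or_odd a with ha | ha
  · rw [if_neg (by simp [Nat.even_iff.mp ha])]
    exact (ha.mul_right b).neg_one_pow
  · rcases Nat.even_or_odd b with hb | hb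
    · rw [if_neg (by simp [Nat.even_iff.mp hb])]
      exact (hb.mul_left a).neg_one_pow
    · rw [if_pos ⟨Nat.odd_iff.mp ha, Nat.odd_iff.mp hb⟩]
      exact (ha.mul hb).neg_one_pow
lemma eps_eq {x y : ℕ} (hx : x % 2 = 1) (hy : y % 2 = 1) :
    ((-1 : ℤ)) ^ (x / 2 * (y / 2)) = etab (x % 4) (y % 4) := by
  rw [neg_one_pow_mul]
  unfold etab
  have h3 : x % 4 = 1 ∨ x % 4 = 3 := by omega
  have h4 : y % 4 = 1 ∨ y % 4 = 3 := by omega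
  rcases h3 with h3 | h3 <;> rcases h4 with h4 | h4 <;>
    · have p1 : x / 2 % 2 = x % 4 / 2 := by omega
      have p2 : y / 2 % 2 = y % 4 / 2 := by omega
      rw [h3] at p1
      rw [h4] at p2
      norm_num at p1 p2
      simp [h3, h4, p1, p2]
lemma qr {x y : ℕ} (hx : x % 2 = 1) (hy : y % 2 = 1) :
    jacobiSym (x : ℤ) y = etab (x % 4) (y % 4) * jacobiSym (y : ℤ) x := by
  rw [jacobiSym.quadratic_reciprocity (Nat.odd_iff.2 hx) (Nat.odd_iff.2 hy), eps_eq hx hy]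
lemma jmod {x y y' m : ℕ} (h : y = y' + m * x) :
    jacobiSym (y : ℤ) x = jacobiSym (y' : ℤ) x := by
  apply jacobiSym.mod_left'
  have h2 : (y : ℤ) = y' + (x : ℤ) * m := by push_cast [h]; ring
  rw [h2, Int.add_mul_emod_self_left]
lemma etab_mul_self (a b : ℕ) : etab a b * etab a b = 1 := by
  unfold etab; split <;> norm_num
lemma scalar_odd : ∀ A Y Y' M : Fin 4, (A : ℕ) % 2 = 1 → (Y : ℕ) % 2 = 1 →
    (Y' : ℕ) % 2 = 1 → (M : ℕ) % 2 = 0 → (Y : ℕ) = ((Y' : ℕ) + (M : ℕ) * (A : ℕ)) % 4 →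
    etab A Y * etab A Y' = ktab A Y M := by decide
lemma scalar_even : ∀ A D : Fin 8, ∀ B C : Fin 4, (A : ℕ) % 2 = 1 → (D : ℕ) % 2 = 1 →
    (A : ℕ) = ((D : ℕ) + 2 * (((B : ℕ) * (C : ℕ)) % 4)) % 8 →
    (if (A : ℕ) = 1 ∨ (A : ℕ) = 7 then (1 : ℤ) else -1) * ktab B ((A : ℕ) % 4) ((2 * (C : ℕ)) % 4)
      = ktab ((2 * (B : ℕ)) % 4) ((A : ℕ) % 4) ((C : ℕ) % 4) *
        (if (D : ℕ) = 1 ∨ (D : ℕ) = 7 then (1 : ℤ) else -1) := by decide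

-- χ₈ evaluation for odd n
lemma chi8_odd {n : ℕ} (hn : n % 2 = 1) :
    ZMod.χ₈ (n : ZMod 8) = (if n % 8 = 1 ∨ n % 8 = 7 then (1 : ℤ) else -1) := by
  rw [ZMod.χ₈_nat_eq_if_mod_eight, if_neg (by omega)]

set_option maxHeartbeats 2000000 in
lemma key : ∀ x : ℕ, 0 < x → ∀ y y' m : ℕ, y % 2 = 1 → y' % 2 = 1 → y = y' + m * x →
    jacobiSym (x : ℤ) y = ktab (x % 4) (y % 4) (m % 4) * jacobiSym (x : ℤ) y' := by
  intro x
  induction x using Nat.strong_induction_on with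
  | _ x ih =>
    intro hx y y' m hy hy' h
    rcases Nat.even_or_odd x with hxe | hxo
    · -- x even
      obtain ⟨u, hu⟩ := hxe
      have hxu : x = 2 * u := by omega
      have hu0 : 0 < u := by omega
      have hx2u : (x : ℤ) = 2 * (u : ℤ) := by push_cast [hxu]; ring
      have ihu := ih u (by omega) hu0 y y' (2 * m) hy hy' (by rw [h, hxu]; ring)
      rw [hx2u, jacobiSym.mul_left, jacobiSym.mul_left,
          jacobiSym.at_two (Nat.odd_iff.2 hy), jacobiSym.at_two (Nat.odd_iff.2 hy'), ihu,
          chi8_odd hy, chi8_odd hy']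
      have e1 : y % 8 = (y' % 8 + 2 * ((u % 4) * (m % 4) % 4)) % 8 := by
        have e2 : (2 * (u * m)) % 8 = 2 * ((u * m) % 4) := by
          have := Nat.mul_mod_mul_left 2 (u * m) 4
          norm_num at this; exact this
        have e3 : (u * m) % 4 = (u % 4) * (m % 4) % 4 := Nat.mul_mod u m 4
        have h8 : y = y' + 2 * (u * m) := by rw [h, hxu]; ring
        rw [h8, Nat.add_mod, e2, e3]
      have sc0 := scalar_even ⟨y % 8, by omega⟩ ⟨y' % 8, by omega⟩ ⟨u % 4, by omega⟩
          ⟨m % 4, by omega⟩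
      simp only [Fin.val_mk] at sc0
      have sc := sc0 (by omega) (by omega) e1
      have r1 : y % 8 % 4 = y % 4 := by omega
      have r2 : 2 * (m % 4) % 4 = 2 * m % 4 := by omega
      have r3 : 2 * (u % 4) % 4 = x % 4 := by omega
      have r4 : m % 4 % 4 = m % 4 := by omega
      have r5 : u % 4 = u % 4 := rfl
      rw [r1, r2, r3, r4] at sc
      rw [← mul_assoc, ← mul_assoc, sc]
    · -- x odd
      have hx2 : x % 2 = 1 := Nat.odd_iff.mp hxo
      have hmx2 : (m * x) % 2 = 0 := by omega
      have hm2 : m % 2 = 0 := by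
        have := Nat.mul_mod m x 2
        rw [hx2, mul_one] at this
        omega
      have hqy := qr hx2 hy
      have hqy' := qr hx2 hy'
      have hmm : jacobiSym (y : ℤ) x = jacobiSym (y' : ℤ) x := jmod h
      have hrel : y % 4 = (y' % 4 + (m % 4) * (x % 4)) % 4 := by
        have e3 : (m * x) % 4 = (m % 4) * (x % 4) % 4 := Nat.mul_mod m x 4
        rw [h, Nat.add_mod, e3]
        omega
      have sc0 := scalar_odd ⟨x % 4, by omega⟩ ⟨y % 4, by omega⟩ ⟨y' % 4, by omega⟩
          ⟨m % 4, by omega⟩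
      simp only [Fin.val_mk] at sc0
      have sc := sc0 (by omega) (by omega) (by omega) (by omega) (by omega)
      rw [hqy, hmm, hqy', ← mul_assoc]
      have fin : ktab (x % 4) (y % 4) (m % 4) * etab (x % 4) (y' % 4) = etab (x % 4) (y % 4) := by
        rw [← sc, mul_assoc, etab_mul_self, mul_one]
      rw [← fin, mul_assoc]
def sbtab : ℕ → ℕ → ℕ → ℤ := fun x y m =>
  if y % 2 = 0 then etab x ((y + 4 - (m * x) % 4) % 4)
  else if x % 2 = 1 ∧ m = 1 then etab x y
  else ktab x y m
def satab : ℕ → ℕ → ℕ → ℤ := fun x y m => if y % 2 = 1 then 1 else ktab y x m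
def sa : ZMod 4 → ZMod 4 → ZMod 4 → ℤ := fun a b c => satab a.val b.val c.val
def sb : ZMod 4 → ZMod 4 → ZMod 4 → ℤ := fun a b c => sbtab a.val b.val c.val


-- value lemmas for sa/sb
lemma val4 (n : ℕ) : ((n : ZMod 4)).val = n % 4 := ZMod.val_natCast 4 n

lemma sa_odd {x y m : ℕ} (hy : y % 2 = 1) : sa (x : ZMod 4) (y : ZMod 4) (m : ZMod 4) = 1 := by
  unfold sa satab
  rw [val4, val4, val4, if_pos (by omega)]

lemma sa_even {x y m : ℕ} (hy : y % 2 = 0) :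
    sa (x : ZMod 4) (y : ZMod 4) (m : ZMod 4) = ktab (y % 4) (x % 4) (m % 4) := by
  unfold sa satab
  rw [val4, val4, val4, if_neg (by omega)]

lemma sb_oddA {x y : ℕ} (hx : x % 2 = 1) (hy : y % 2 = 1) :
    sb (x : ZMod 4) (y : ZMod 4) ((1 : ℕ) : ZMod 4) = etab (x % 4) (y % 4) := by
  unfold sb sbtab
  rw [val4, val4, val4]
  rw [if_neg (by omega), if_pos (by constructor <;> omega)]

lemma sb_oddK {x y m : ℕ} (hy : y % 2 = 1) (hm : ¬(x % 2 = 1 ∧ m % 4 = 1)) :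
    sb (x : ZMod 4) (y : ZMod 4) (m : ZMod 4) = ktab (x % 4) (y % 4) (m % 4) := by
  unfold sb sbtab
  rw [val4, val4, val4]
  rw [if_neg (by omega), if_neg (by omega)]

lemma sb_evenC {x y m : ℕ} (hy : y % 2 = 0) :
    sb (x : ZMod 4) (y : ZMod 4) (m : ZMod 4)
      = etab (x % 4) ((y % 4 + 4 - ((m % 4) * (x % 4)) % 4) % 4) := by
  unfold sb sbtab
  rw [val4, val4, val4, if_pos (by omega)]

def V (x y : ℕ) : ℤ := if y % 2 = 1 then jacobiSym (x : ℤ) y else jacobiSym (y : ℤ) x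

lemma V_odd {x y : ℕ} (hy : y % 2 = 1) : V x y = jacobiSym (x : ℤ) y := if_pos hy
lemma V_even {x y : ℕ} (hy : y % 2 = 0) : V x y = jacobiSym (y : ℤ) x := by
  unfold V; rw [if_neg (by omega)]

def StepRel (p q : ℕ × ℕ) (mk : ℕ) (sk : ℤ) : Prop :=
  (p.2 ≤ p.1 ∧ 1 ≤ mk ∧ mk ≤ p.1 / p.2 ∧ q = (p.1 - mk * p.2, p.2) ∧
      sk = sa (p.1 : ZMod 4) (p.2 : ZMod 4) (mk : ZMod 4)) ∨
  (p.1 < p.2 ∧ 1 ≤ mk ∧ mk ≤ p.2 / p.1 ∧ q = (p.1, p.2 - mk * p.1) ∧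
      sk = sb (p.1 : ZMod 4) (p.2 : ZMod 4) (mk : ZMod 4))

def Good (x y : ℕ) : Prop :=
  ∃ (n : ℕ) (f : ℕ → ℕ × ℕ) (m : ℕ → ℕ) (s : ℕ → ℤ),
    f 0 = (x, y) ∧ (∀ k < n, StepRel (f k) (f (k + 1)) (m k) (s k)) ∧ (f n).1 = 0 ∧
    V x y = (if (f n).2 = 1 then 1 else 0) * ∏ k ∈ Finset.range n, s k

lemma good_zero {y : ℕ} (hy : y % 2 = 1) : Good 0 y := by
  refine ⟨0, fun _ => (0, y), fun _ => 0, fun _ => 1, rfl, by omega, rfl, ?_⟩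
  rw [Finset.prod_range_zero, mul_one, V_odd hy]
  by_cases h1 : y = 1
  · subst h1; simp
  · rw [if_neg h1, show ((0 : ℕ) : ℤ) = 0 from rfl, jacobiSym.zero_left (by omega)]

lemma good_step {x y : ℕ} {p : ℕ × ℕ} {mk : ℕ} {sk : ℤ}
    (h1 : StepRel (x, y) p mk sk) (h2 : V x y = sk * V p.1 p.2) (h3 : Good p.1 p.2) :
    Good x y := by
  obtain ⟨n, f, m, s, h0, hst, hend, heq⟩ := h3
  refine ⟨n + 1, fun k => if k = 0 then (x, y) else f (k - 1),
      fun k => if k = 0 then mk else m (k - 1), fun k => if k = 0 then sk else s (k - 1),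
      by simp, ?_, by simpa using hend, ?_⟩
  · intro k hk
    rcases k with _ | j
    · simpa [h0] using h1
    · simpa using hst j (by omega)
  · have hP : (∏ k ∈ Finset.range (n + 1), if k = 0 then sk else s (k - 1))
        = (∏ k ∈ Finset.range n, s k) * sk := by
      rw [Finset.prod_range_succ']
      simp
    simp only [Nat.succ_ne_zero, if_false, Nat.add_sub_cancel]
    rw [hP, h2, heq]
    ring

lemma good_main : ∀ N x y : ℕ, x + y ≤ N → y % 2 = 1 → Good x y := by
  intro N
  induction N with
  | zero => intro x y h hy; omega
  | succ N ih =>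
    intro x y hsum hy
    rcases Nat.eq_zero_or_pos x with hx0 | hx0
    · subst hx0; exact good_zero hy
    rcases le_or_gt y x with hyx | hxy
    · -- branch 1: reduce x
      obtain ⟨mk, hmk⟩ : ∃ mk, mk = x / y := ⟨_, rfl⟩
      have hy0 : 0 < y := by omega
      have hxy' : x % y + mk * y = x := by rw [hmk, mul_comm]; exact Nat.mod_add_div x y
      have hmod : x % y < y := Nat.mod_lt _ hy0
      have hmk1 : 1 ≤ mk := by rw [hmk]; exact (Nat.one_le_div_iff hy0).mpr hyx
      have hple : mk * y ≤ x := by omega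
      have hxr : x - mk * y = x % y := by omega
      have hstep : StepRel (x, y) (x - mk * y, y) mk (sa (x : ZMod 4) (y : ZMod 4) (mk : ZMod 4)) :=
        Or.inl ⟨hyx, hmk1, le_of_eq hmk, rfl, rfl⟩
      have hpos : 0 < mk * y := Nat.mul_pos (by omega) hy0
      have hrec : Good (x - mk * y) y := by
        apply ih _ _ _ hy
        omega
      apply good_step hstep _ hrec
      rw [sa_odd hy, one_mul, V_odd hy, V_odd hy]
      exact jmod (show x = (x - mk * y) + mk * y by omega)
    · -- branch 2 : x < y
      rcases Nat.even_or_odd x with hxe | hxo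
      · -- x even : full reduction of y
        have hx2 : x % 2 = 0 := Nat.even_iff.mp hxe
        obtain ⟨mk, hmk⟩ : ∃ mk, mk = y / x := ⟨_, rfl⟩
        have hyx' : y % x + mk * x = y := by rw [hmk, mul_comm]; exact Nat.mod_add_div y x
        have hmod : y % x < x := Nat.mod_lt _ hx0
        have hmk1 : 1 ≤ mk := by rw [hmk]; exact (Nat.one_le_div_iff hx0).mpr (le_of_lt hxy)
        have hmxe : (mk * x) % 2 = 0 := Nat.even_iff.mp (hxe.mul_left mk)
        have hy'2 : (y - mk * x) % 2 = 1 := by omega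
        have hstep : StepRel (x, y) (x, y - mk * x) mk (sb (x : ZMod 4) (y : ZMod 4) (mk : ZMod 4)) :=
          Or.inr ⟨hxy, hmk1, le_of_eq hmk, rfl, rfl⟩
        have hpos : 0 < mk * x := Nat.mul_pos (by omega) hx0
        have hrec : Good x (y - mk * x) := by
          apply ih _ _ _ hy'2
          omega
        apply good_step hstep _ hrec
        rw [V_odd hy, V_odd hy'2, sb_oddK hy (by omega)]
        exact key x hx0 y (y - mk * x) mk hy hy'2 (by omega)
      · have hx2 : x % 2 = 1 := Nat.odd_iff.mp hxo
        obtain ⟨q, hq⟩ : ∃ q, q = y / x := ⟨_, rfl⟩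
        have hyx' : y % x + q * x = y := by rw [hq, mul_comm]; exact Nat.mod_add_div y x
        have hmod : y % x < x := Nat.mod_lt _ hx0
        have hq0 : 1 ≤ q := by rw [hq]; exact (Nat.one_le_div_iff hx0).mpr (le_of_lt hxy)
        rcases le_or_gt 2 q with hq2 | hq1
        · -- x odd, quotient at least 2 : take largest even multiple
          obtain ⟨mk, hmk⟩ : ∃ mk, mk = 2 * (q / 2) := ⟨_, rfl⟩
          have hmk1 : 1 ≤ mk ∧ mk ≤ q := by omega
          have hple : mk * x ≤ q * x := Nat.mul_le_mul_right x hmk1.2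
          have hmxe : (mk * x) % 2 = 0 := by
            have h5 : mk * x = 2 * ((q / 2) * x) := by rw [hmk]; ring
            omega
          have hy'2 : (y - mk * x) % 2 = 1 := by omega
          have hstep : StepRel (x, y) (x, y - mk * x) mk
              (sb (x : ZMod 4) (y : ZMod 4) (mk : ZMod 4)) :=
            Or.inr ⟨hxy, hmk1.1, by show mk ≤ y / x; omega, rfl, rfl⟩
          have hpos : 0 < mk * x := Nat.mul_pos (by omega) hx0
          have hrec : Good x (y - mk * x) := by
            apply ih _ _ _ hy'2
            omega
          apply good_step hstep _ hrec
          rw [V_odd hy, V_odd hy'2, sb_oddK hy (by omega)]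
          exact key x hx0 y (y - mk * x) mk hy hy'2 (by omega)
        · -- x odd, quotient 1 : three-step gadget
          have hqq : q = 1 := by omega
          have hx1 : x ≠ 1 := by
            rintro rfl
            rw [Nat.div_one] at hq
            omega
          have hqx : q * x = x := by rw [hqq, one_mul]
          obtain ⟨e, he⟩ : ∃ e, e = y - 1 * x := ⟨_, rfl⟩
          have he2 : e % 2 = 0 := by omega
          have he0 : 0 < e := by omega
          have hex : e < x := by omega
          -- step B data
          obtain ⟨mk2, hmk2⟩ : ∃ m2, m2 = x / e := ⟨_, rfl⟩
          have hbe : x % e + mk2 * e = x := by rw [hmk2, mul_comm]; exact Nat.mod_add_div x e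
          have hbmod : x % e < e := Nat.mod_lt _ he0
          have hmk21 : 1 ≤ mk2 := by rw [hmk2]; exact (Nat.one_le_div_iff he0).mpr (le_of_lt hex)
          obtain ⟨x1, hx1d⟩ : ∃ x1, x1 = x - mk2 * e := ⟨_, rfl⟩
          have hm2e : (mk2 * e) % 2 = 0 := Nat.even_iff.mp ((Nat.even_iff.mpr he2).mul_left mk2)
          have hx12 : x1 % 2 = 1 := by omega
          have hx10 : 0 < x1 := by omega
          have hx1e : x1 < e := by omega
          -- step C data
          obtain ⟨q3, hq3⟩ : ∃ q3, q3 = e / x1 := ⟨_, rfl⟩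
          have hce : e % x1 + q3 * x1 = e := by rw [hq3, mul_comm]; exact Nat.mod_add_div e x1
          have hcmod : e % x1 < x1 := Nat.mod_lt _ hx10
          have hq31 : 1 ≤ q3 := by rw [hq3]; exact (Nat.one_le_div_iff hx10).mpr (le_of_lt hx1e)
          obtain ⟨m3, hm3⟩ : ∃ m3, m3 = if q3 % 2 = 1 then q3 else q3 - 1 := ⟨_, rfl⟩
          have hm3p : m3 % 2 = 1 ∧ 1 ≤ m3 ∧ m3 ≤ q3 := by
            rw [hm3]; split <;> omega
          have hm3le : m3 * x1 ≤ q3 * x1 := Nat.mul_le_mul_right x1 hm3p.2.2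
          have hm3odd : (m3 * x1) % 2 = 1 := by
            have h6 := Nat.mul_mod m3 x1 2
            rw [hm3p.1, hx12] at h6
            omega
          obtain ⟨y2, hy2d⟩ : ∃ y2, y2 = e - m3 * x1 := ⟨_, rfl⟩
          have hy22 : y2 % 2 = 1 := by omega
          have hy20 : 0 < y2 := by omega
          have hy2e : y2 < e := by omega
          -- the three steps
          have hstepA : StepRel (x, y) (x, y - 1 * x) 1
              (sb (x : ZMod 4) (y : ZMod 4) ((1 : ℕ) : ZMod 4)) :=
            Or.inr ⟨hxy, le_refl 1, by show 1 ≤ y / x; omega, rfl, rfl⟩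
          have hstepB : StepRel (x, e) (x - mk2 * e, e) mk2
              (sa (x : ZMod 4) (e : ZMod 4) (mk2 : ZMod 4)) :=
            Or.inl ⟨le_of_lt hex, hmk21, le_of_eq hmk2, rfl, rfl⟩
          have hstepC : StepRel (x1, e) (x1, e - m3 * x1) m3
              (sb (x1 : ZMod 4) (e : ZMod 4) (m3 : ZMod 4)) :=
            Or.inr ⟨hx1e, hm3p.2.1, by show m3 ≤ e / x1; omega, rfl, rfl⟩
          have hrec : Good x1 y2 := by
            apply ih _ _ _ hy22
            omega
          have h2A : V x y = sb (x : ZMod 4) (y : ZMod 4) ((1 : ℕ) : ZMod 4) * V x e := by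
            rw [V_odd hy, V_even he2, sb_oddA hx2 hy, qr hx2 hy,
                jmod (show y = e + 1 * x by omega)]
          have h2B : V x e = sa (x : ZMod 4) (e : ZMod 4) (mk2 : ZMod 4) * V x1 e := by
            rw [V_even he2, V_even he2, sa_even he2]
            exact key e he0 x x1 mk2 hx2 hx12 (by omega)
          have h2C : V x1 e = sb (x1 : ZMod 4) (e : ZMod 4) (m3 : ZMod 4) * V x1 y2 := by
            have hargs : (e % 4 + 4 - ((m3 % 4) * (x1 % 4)) % 4) % 4 = y2 % 4 := by
              have e4 : e % 4 = (y2 % 4 + (m3 * x1) % 4) % 4 := by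
                conv_lhs => rw [show e = y2 + m3 * x1 by omega]
                rw [Nat.add_mod]
              have e5 : (m3 * x1) % 4 = ((m3 % 4) * (x1 % 4)) % 4 := Nat.mul_mod m3 x1 4
              omega
            rw [V_even he2, V_odd hy22, sb_evenC he2, hargs,
                jmod (show e = y2 + m3 * x1 by omega), qr hx12 hy22, ← mul_assoc,
                etab_mul_self, one_mul]
          have hGC : Good x1 (e - m3 * x1) := by rw [← hy2d]; exact hrec
          have hGB : Good x1 e := good_step hstepC (by rw [← hy2d]; exact h2C) hGC
          have hGB' : Good (x - mk2 * e) e := by rw [← hx1d]; exact hGB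
          have hGA : Good x e := good_step hstepB (by rw [← hx1d]; exact h2B) hGB'
          have hGA' : Good x (y - 1 * x) := by rw [← he]; exact hGA
          exact good_step hstepA (by rw [← he]; exact h2A) hGA'

end LRJ

theorem left_to_right_jacobi_correct :
    ∃ σa σb : ZMod 4 → ZMod 4 → ZMod 4 → ℤ,
      ∀ a b : ℕ, 0 < a → 0 < b → Odd b →
        ∃ (n : ℕ) (f : ℕ → ℕ × ℕ) (m : ℕ → ℕ) (s : ℕ → ℤ),
          f 0 = (a, b) ∧
          (∀ k < n,
            ((f k).2 ≤ (f k).1 ∧ 1 ≤ m k ∧ m k ≤ (f k).1 / (f k).2 ∧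
              f (k + 1) = ((f k).1 - m k * (f k).2, (f k).2) ∧
              s k = σa ((f k).1 : ZMod 4) ((f k).2 : ZMod 4) (m k : ZMod 4)) ∨
            ((f k).1 < (f k).2 ∧ 1 ≤ m k ∧ m k ≤ (f k).2 / (f k).1 ∧
              f (k + 1) = ((f k).1, (f k).2 - m k * (f k).1) ∧
              s k = σb ((f k).1 : ZMod 4) ((f k).2 : ZMod 4) (m k : ZMod 4))) ∧
          (((f n).1 = 0 ∧
              jacobiSym (a : ℤ) b =
                (if (f n).2 = 1 then 1 else 0) * ∏ k ∈ Finset.range n, s k) ∨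
           ((f n).2 = 0 ∧
              jacobiSym (a : ℤ) b =
                (if (f n).1 = 1 then 1 else 0) * ∏ k ∈ Finset.range n, s k)) := by
  refine ⟨LRJ.sa, LRJ.sb, ?_⟩
  intro a b ha hb hodd
  obtain ⟨n, f, m, s, h0, hst, hend, heq⟩ :=
    LRJ.good_main (a + b) a b le_rfl (Nat.odd_iff.mp hodd)
  refine ⟨n, f, m, s, h0, fun k hk => hst k hk, Or.inl ⟨hend, ?_⟩⟩
  rw [← LRJ.V_odd (x := a) (Nat.odd_iff.mp hodd)]
  exact heq
end
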